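/- For every nonnegative integer L, ∑_{j=0}^{L} q^j (q;q)_L (q^{j-L};q)_j / ((q;q)_j^2 (q^{-L};q)_j) = ∑_{n=0}^{L} (-1)^n q^{T_n}, where T_n = n(n+1)/2, as an identity of rational functions (in fact polynomials) in q. -/

import Mathlib

/-- The q-Pochhammer symbol `(a;q)_n = ∏_{m=0}^{n-1} (1 - a q^m)`. -/
noncomputable def qPoch {K : Type*} [Field K] (a q : K) (n : ℕ) : K :=
  ∏ m ∈ Finset.range n, (1 - a * q ^ m)

/-- The Gaussian binomial coefficient `[m choose n]_q`, interpreted as `0`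
when `n < 0` or `m < n`. -/
noncomputable def qbinom {K : Type*} [Field K] (q : K) (m n : ℤ) : K :=
  if 0 ≤ n ∧ n ≤ m then
    qPoch q q m.toNat / (qPoch q q n.toNat * qPoch q q (m - n).toNat)
  else 0

/-- Triangular numbers `T n = n(n+1)/2`. -/
def T (n : ℕ) : ℕ := n * (n + 1) / 2

section Aux

variable {K : Type*} [Field K]

lemma qPoch_succ (q : K) (n : ℕ) : qPoch q q (n+1) = qPoch q q n * (1 - q^(n+1)) := by
  rw [qPoch, Finset.prod_range_succ, ← qPoch, pow_succ']

lemma prodB (q : K) (M : ℕ) : ∀ n, n ≤ M →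
    qPoch q q (M - n) * ∏ m ∈ Finset.range n, (1 - q^(M-m)) = qPoch q q M := by
  intro n
  induction n with
  | zero => simp
  | succ n ih =>
    intro h
    rw [Finset.prod_range_succ, show M - n = (M - (n+1)) + 1 by omega, qPoch_succ,
      show M - (n+1) + 1 = M - n by omega] at *
    have := ih (by omega)
    rw [← this]
    ring

lemma key (q : K) (hq0 : q ≠ 0) (M : ℕ) : ∀ n, n ≤ M →
    qPoch (q ^ (-(M:ℤ))) q n
      = (-1)^n * (q ^ (∑ m ∈ Finset.range n, (M - m)))⁻¹ * ∏ m ∈ Finset.range n, (1 - q^(M-m)) := by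
  intro n
  induction n with
  | zero => simp [qPoch]
  | succ n ih =>
    intro h
    rw [qPoch, Finset.prod_range_succ, ← qPoch, ih (by omega)]
    have hx : (q:K) ^ (-(M:ℤ)) * q ^ n = (q ^ (M - n))⁻¹ := by
      rw [zpow_neg, zpow_natCast]
      field_simp
      rw [← pow_add]
      congr 1
      omega
    have h2 : (1 : K) - q ^ (-(M:ℤ)) * q ^ n = -(q ^ (M-n))⁻¹ * (1 - q^(M-n)) := by
      rw [hx]
      have : (q:K)^(M-n) ≠ 0 := pow_ne_zero _ hq0
      field_simp
      ring
    rw [h2, Finset.sum_range_succ, Finset.prod_range_succ]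
    simp only [pow_add, pow_one, mul_inv]
    ring

noncomputable def sAux (q : K) (L j : ℕ) : K :=
  if 2*j ≤ L then q^(j*j+j) * qPoch q q (L-j)^2 / (qPoch q q j^2 * qPoch q q (L-2*j)) else 0

lemma qPoch_ne_zero (q : K) (n : ℕ) (h : ∀ m, 1 ≤ m → m ≤ n → q^m ≠ 1) :
    qPoch q q n ≠ 0 := by
  rw [qPoch]
  apply Finset.prod_ne_zero_iff.mpr
  intro m hm
  rw [Finset.mem_range] at hm
  rw [← pow_succ']
  exact sub_ne_zero.mpr (fun h' => h (m+1) (by omega) (by omega) h'.symm)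

lemma prodB_ne_zero (q : K) (L M n : ℕ) (hq : ∀ m, 1 ≤ m → m ≤ L → q^m ≠ 1)
    (hn : n ≤ M) (hM : M ≤ L) :
    (∏ m ∈ Finset.range n, (1 - q^(M-m))) ≠ 0 := by
  apply Finset.prod_ne_zero_iff.mpr
  intro m hm
  rw [Finset.mem_range] at hm
  exact sub_ne_zero.mpr (fun h' => hq (M-m) (by omega) (by omega) h'.symm)

lemma orig_eq (q : K) (hq0 : q ≠ 0) (L : ℕ) (hq : ∀ n, 1 ≤ n → n ≤ L → q^n ≠ 1)
    (j : ℕ) (hj : j ≤ L) :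
    q ^ j * qPoch q q L * qPoch (q ^ ((j : ℤ) - (L : ℤ))) q j /
      (qPoch q q j ^ 2 * qPoch (q ^ (-(L : ℤ))) q j) = sAux q L j := by
  by_cases h2 : 2*j ≤ L
  · have hjLj : j ≤ L - j := by omega
    have hQ1 := key q hq0 (L-j) j hjLj
    have hQ2 := key q hq0 L j hj
    have hB1 := prodB q (L-j) j hjLj
    have hB2 := prodB q L j hj
    rw [show ((j:ℤ) - (L:ℤ)) = -((L-j : ℕ) : ℤ) by omega]
    rw [hQ1, hQ2, sAux, if_pos h2, ← hB2]
    rw [show L - j - j = L - 2*j by omega] at hB1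
    rw [← hB1]
    have hE : ∑ m ∈ Finset.range j, (L - m) = (∑ m ∈ Finset.range j, (L - j - m)) + j*j := by
      have : ∀ m ∈ Finset.range j, L - m = (L - j - m) + j := by
        intro m hm; rw [Finset.mem_range] at hm; omega
      rw [Finset.sum_congr rfl this, Finset.sum_add_distrib, Finset.sum_const,
        Finset.card_range, smul_eq_mul]
    rw [hE]
    simp only [pow_add]
    have hPj : qPoch q q j ≠ 0 := qPoch_ne_zero q j (fun m a b => hq m a (by omega))
    have hP2 : qPoch q q (L - 2*j) ≠ 0 := qPoch_ne_zero q _ (fun m a b => hq m a (by omega))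
    have hB2z : (∏ m ∈ Finset.range j, (1 - q^(L-m))) ≠ 0 := prodB_ne_zero q L L j hq hj le_rfl
    have hqj : (q:K)^j ≠ 0 := pow_ne_zero _ hq0
    have hqjj : (q:K)^(j*j) ≠ 0 := pow_ne_zero _ hq0
    have hqE : (q:K)^(∑ m ∈ Finset.range j, (L - j - m)) ≠ 0 := pow_ne_zero _ hq0
    have hm1 : ((-1 : K))^j ≠ 0 := pow_ne_zero _ (by norm_num)
    field_simp
  · have hz : qPoch (q ^ ((j : ℤ) - (L : ℤ))) q j = 0 := by
      rw [qPoch]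
      apply Finset.prod_eq_zero (Finset.mem_range.mpr (show L - j < j by omega))
      have : (q:K) ^ ((j:ℤ)-(L:ℤ)) * q ^ (L-j) = 1 := by
        rw [← zpow_natCast q (L-j), ← zpow_add₀ hq0,
          show (j:ℤ) - (L:ℤ) + ((L-j:ℕ):ℤ) = 0 by omega, zpow_zero]
      rw [this, sub_self]
    rw [hz]
    simp [sAux, h2]

lemma s_rec (q : K) (hq0 : q ≠ 0) (L j : ℕ) (hq : ∀ n, 1 ≤ n → n ≤ L+2 → q^n ≠ 1) :
    sAux q (L+2) (j+1) = (1 - q^(L+2)) * sAux q (L+1) (j+1) + q^(L+2) * sAux q L j := by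
  by_cases h1 : 2*j + 1 ≤ L
  · -- generic case
    obtain ⟨d, rfl⟩ : ∃ d, L = 2*j+1+d := ⟨L - (2*j+1), by omega⟩
    have hPj : qPoch q q j ≠ 0 := qPoch_ne_zero q j (fun m a b => hq m a (by omega))
    have hPd : qPoch q q d ≠ 0 := qPoch_ne_zero q d (fun m a b => hq m a (by omega))
    have f1 : (1:K) - q^(j+1) ≠ 0 :=
      sub_ne_zero.mpr (fun h' => hq (j+1) (by omega) (by omega) h'.symm)
    have f2 : (1:K) - q^(d+1) ≠ 0 :=
      sub_ne_zero.mpr (fun h' => hq (d+1) (by omega) (by omega) h'.symm)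
    simp only [sAux]
    rw [if_pos (show 2*(j+1) ≤ 2*j+1+d+2 by omega),
      if_pos (show 2*(j+1) ≤ 2*j+1+d+1 by omega),
      if_pos (show 2*j ≤ 2*j+1+d by omega),
      show 2*j+1+d+2 - (j+1) = (j+d+1)+1 by omega,
      show 2*j+1+d+2 - 2*(j+1) = d+1 by omega,
      show 2*j+1+d+1 - (j+1) = j+d+1 by omega,
      show 2*j+1+d+1 - 2*(j+1) = d by omega,
      show 2*j+1+d - j = j+d+1 by omega,
      show 2*j+1+d - 2*j = d+1 by omega,
      qPoch_succ q (j+d+1), qPoch_succ q d, qPoch_succ q j]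
    field_simp
    ring
  · by_cases h2 : 2*j = L
    · subst h2
      have hPj : qPoch q q j ≠ 0 := qPoch_ne_zero q j (fun m a b => hq m a (by omega))
      have f1 : (1:K) - q^(j+1) ≠ 0 :=
        sub_ne_zero.mpr (fun h' => hq (j+1) (by omega) (by omega) h'.symm)
      simp only [sAux]
      rw [if_pos (show 2*(j+1) ≤ 2*j+2 by omega),
        if_neg (show ¬ 2*(j+1) ≤ 2*j+1 by omega),
        if_pos (le_refl (2*j)),
        show 2*j+2 - (j+1) = j+1 by omega,
        show 2*j+2 - 2*(j+1) = 0 by omega,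
        show 2*j - j = j by omega,
        Nat.sub_self, qPoch_succ q j]
      have hP0 : qPoch q q 0 = 1 := by simp [qPoch]
      rw [hP0]
      field_simp
      ring
    · simp only [sAux]
      rw [if_neg (by omega), if_neg (by omega), if_neg (by omega)]
      ring

lemma T_succ (n : ℕ) : T (n+1) = T n + (n+1) := by
  have h1 : ∃ k, n * (n+1) = 2 * k := (Nat.even_mul_succ_self n).exists_two_nsmul _
  obtain ⟨k, hk⟩ := h1
  have h2 : (n+1) * (n+1+1) = n * (n+1) + 2*(n+1) := by ring
  simp only [T]
  omega

lemma main_sum (q : K) (hq0 : q ≠ 0) : ∀ L, (∀ n, 1 ≤ n → n ≤ L → q^n ≠ 1) →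
    ∑ j ∈ Finset.range (L+1), sAux q L j
      = ∑ n ∈ Finset.range (L+1), (-1:K)^n * q^(T n) := by
  intro L
  induction L using Nat.strong_induction_on with
  | _ L ih =>
    match L with
    | 0 =>
      intro _
      simp [sAux, qPoch, T]
    | 1 =>
      intro hq
      have h1 : (1:K) - q ≠ 0 :=
        sub_ne_zero.mpr (fun h' => hq 1 le_rfl le_rfl (by simpa using h'.symm))
      simp only [Finset.sum_range_succ, Finset.sum_range_zero, zero_add]
      simp only [sAux]
      rw [if_pos (by omega), if_neg (by omega)]
      simp only [T]
      simp [qPoch, Finset.prod_range_succ]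
      field_simp
      ring
    | (L+2) =>
      intro hq
      have ih1 := ih (L+1) (by omega) (fun n a b => hq n a (by omega))
      have ih0 := ih L (by omega) (fun n a b => hq n a (by omega))
      -- LHS recurrence
      have step : ∑ j ∈ Finset.range (L+3), sAux q (L+2) j
          = (1 - q^(L+2)) * ∑ j ∈ Finset.range (L+2), sAux q (L+1) j
            + q^(L+2) * ∑ j ∈ Finset.range (L+1), sAux q L j := by
        rw [Finset.sum_range_succ' (fun j => sAux q (L+2) j) (L+2)]
        have h0 : sAux q (L+2) 0 = (1 - q^(L+2)) * sAux q (L+1) 0 := by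
          simp only [sAux]
          rw [if_pos (by omega), if_pos (by omega)]
          simp only [Nat.sub_zero, Nat.mul_zero]
          rw [show L + 2 = (L+1)+1 from rfl, qPoch_succ q (L+1)]
          have hP0 : qPoch q q 0 = 1 := by simp [qPoch]
          have hP1 : qPoch q q (L+1) ≠ 0 :=
            qPoch_ne_zero q (L+1) (fun m a b => hq m a (by omega))
          have hP2 : qPoch q q (L+1) * (1 - q^(L+1+1)) ≠ 0 := by
            apply mul_ne_zero hP1
            exact sub_ne_zero.mpr (fun h' => hq (L+2) (by omega) (by omega) h'.symm)
          rw [hP0]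
          field_simp
        have hrec : ∀ i ∈ Finset.range (L+2), sAux q (L+2) (i+1)
            = (1 - q^(L+2)) * sAux q (L+1) (i+1) + q^(L+2) * sAux q L i :=
          fun i _ => s_rec q hq0 L i hq
        rw [Finset.sum_congr rfl hrec, Finset.sum_add_distrib, ← Finset.mul_sum,
          ← Finset.mul_sum, h0]
        have hA : ∑ j ∈ Finset.range (L+2), sAux q (L+1) j
            = sAux q (L+1) 0 + ∑ i ∈ Finset.range (L+1), sAux q (L+1) (i+1) := by
          rw [Finset.sum_range_succ' (fun j => sAux q (L+1) j) (L+1)]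
          ring
        have hz1 : sAux q (L+1) (L+1+1) = 0 := by
          simp only [sAux]; rw [if_neg (by omega)]
        have hB : ∑ i ∈ Finset.range (L+2), sAux q (L+1) (i+1)
            = ∑ i ∈ Finset.range (L+1), sAux q (L+1) (i+1) := by
          rw [Finset.sum_range_succ, hz1, add_zero]
        have hz2 : sAux q L (L+1) = 0 := by
          simp only [sAux]; rw [if_neg (by omega)]
        have hC : ∑ i ∈ Finset.range (L+2), sAux q L i
            = ∑ i ∈ Finset.range (L+1), sAux q L i := by
          rw [Finset.sum_range_succ, hz2, add_zero]
        rw [hB, hC, hA]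
        ring
      rw [step, ih1, ih0]
      -- RHS recurrence
      rw [show L + 3 = (L+2)+1 from rfl, Finset.sum_range_succ (fun n => (-1:K)^n * q^(T n)) (L+2)]
      rw [Finset.sum_range_succ (fun n => (-1:K)^n * q^(T n)) (L+1)]
      rw [T_succ (L+1), pow_add]
      ring

end Aux

theorem stmt4 {K : Type*} [Field K] (L : ℕ) (q : K) (hq0 : q ≠ 0)
    (hq : ∀ n : ℕ, 1 ≤ n → n ≤ L → q ^ n ≠ 1) :
    ∑ j ∈ Finset.range (L + 1),
        q ^ j * qPoch q q L * qPoch (q ^ ((j : ℤ) - (L : ℤ))) q j /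
          (qPoch q q j ^ 2 * qPoch (q ^ (-(L : ℤ))) q j)
      = ∑ n ∈ Finset.range (L + 1), (-1 : K) ^ n * q ^ T n := by
  have hcongr : ∀ j ∈ Finset.range (L+1),
      q ^ j * qPoch q q L * qPoch (q ^ ((j : ℤ) - (L : ℤ))) q j /
          (qPoch q q j ^ 2 * qPoch (q ^ (-(L : ℤ))) q j) = sAux q L j := by
    intro j hj
    rw [Finset.mem_range] at hj
    exact orig_eq q hq0 L hq j (by omega)
  rw [Finset.sum_congr rfl hcongr]
  exact main_sum q hq0 L hq
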